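/- Let R be an integral domain that is not large, i.e., there exists nonzero α ∈ R with the additive subgroup αR of infinite index in R. Then in the partition R = αR ∪ (R \ αR), the cell αR is not additively central in (R, +) and the cell R \ αR is not multiplicatively central in (R \ {0}, ·). -/

import Mathlib

/-- Product of ultrafilters on a semigroup `S` (the restriction to `βS` of the
Stone–Čech extension of the multiplication):
`A ∈ umul p q ↔ {x | {y | x * y ∈ A} ∈ q} ∈ p`. -/
def umul {S : Type*} [Semigroup S] (p q : Ultrafilter S) : Ultrafilter S :=
  p.bind fun x => q.map (x * ·)

/-- `p` is a minimal idempotent of `(βS, ·)`: `p` is idempotent and minimal for the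
order `q ≤ p ↔ q·p = p·q = q` on idempotents. -/
def IsMinimalIdempotent {S : Type*} [Semigroup S] (p : Ultrafilter S) : Prop :=
  umul p p = p ∧ ∀ q : Ultrafilter S, umul q q = q →
    umul q p = q → umul p q = q → q = p

/-- `A` is central in the semigroup `(S, ·)`: `A` belongs to some minimal idempotent
ultrafilter. -/
def Central {S : Type*} [Semigroup S] (A : Set S) : Prop :=
  ∃ p : Ultrafilter S, IsMinimalIdempotent p ∧ A ∈ p

/-- Sum of ultrafilters on an additive semigroup `S`:
`A ∈ uadd p q ↔ {x | {y | x + y ∈ A} ∈ q} ∈ p`. -/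
def uadd {S : Type*} [AddSemigroup S] (p q : Ultrafilter S) : Ultrafilter S :=
  p.bind fun x => q.map (x + ·)

/-- `p` is a minimal idempotent of `(βS, +)`. -/
def IsMinimalIdempotentAdd {S : Type*} [AddSemigroup S] (p : Ultrafilter S) : Prop :=
  uadd p p = p ∧ ∀ q : Ultrafilter S, uadd q q = q →
    uadd q p = q → uadd p q = q → q = p

/-- `A` is central in the additive semigroup `(S, +)`. -/
def AddCentral {S : Type*} [AddSemigroup S] (A : Set S) : Prop :=
  ∃ p : Ultrafilter S, IsMinimalIdempotentAdd p ∧ A ∈ p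

/-- The multiplicative semigroup `(R \ {0}, ·)` of an integral domain. -/
instance nzSemigroup {R : Type*} [CommRing R] [IsDomain R] :
    Semigroup {x : R // x ≠ 0} where
  mul a b := ⟨a.1 * b.1, mul_ne_zero a.2 b.2⟩
  mul_assoc a b c := Subtype.ext (mul_assoc a.1 b.1 c.1)

/-- `A ⊆ R` is multiplicatively central in `(R \ {0}, ·)`. -/
def MulCentralNZ {R : Type*} [CommRing R] [IsDomain R] (A : Set R) : Prop :=
  Central {x : {x : R // x ≠ 0} | (x : R) ∈ A}

/-- `R` is a large integral domain: every nonzero ideal has finite (additive) index. -/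
def IsLargeID (R : Type*) [CommRing R] [IsDomain R] : Prop :=
  ∀ I : Ideal R, I ≠ ⊥ → Finite (R ⧸ I)


open Filter

section Aux

attribute [local instance] Ultrafilter.mul Ultrafilter.semigroup
attribute [local instance] Ultrafilter.add Ultrafilter.addSemigroup

theorem mem_umul' {S : Type*} [Semigroup S] {p q : Ultrafilter S} {A : Set S} :
    A ∈ umul p q ↔ {x | {y | x * y ∈ A} ∈ q} ∈ p := Iff.rfl

theorem umul_eq' {S : Type*} [Semigroup S] (p q : Ultrafilter S) : umul p q = p * q := rfl

theorem mem_uadd' {S : Type*} [AddSemigroup S] {p q : Ultrafilter S} {A : Set S} :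
    A ∈ uadd p q ↔ {x | {y | x + y ∈ A} ∈ q} ∈ p := Iff.rfl

theorem uadd_eq' {S : Type*} [AddSemigroup S] (p q : Ultrafilter S) : uadd p q = p + q := rfl

theorem key_mul {S : Type*} [Semigroup S] (e : S) (he : ∀ x, e * x = x)
    {p : Ultrafilter S} (hp : IsMinimalIdempotent p) (q : Ultrafilter S) :
    ∃ r, umul r (umul q p) = p := by
  simp only [umul_eq'] at *
  have hpp : p * p = p := hp.1
  -- the family of nonempty closed left ideals contained in (βS)·p
  set 𝒮 : Set (Set (Ultrafilter S)) :=
    { L | L.Nonempty ∧ IsClosed L ∧ L ⊆ Set.range (· * p) ∧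
        ∀ (r : Ultrafilter S), ∀ x ∈ L, r * x ∈ L } with h𝒮
  have hclosed_range : ∀ w : Ultrafilter S, IsClosed (Set.range (· * w)) := by
    intro w
    have := (isCompact_univ.image (Ultrafilter.continuous_mul_left w)).isClosed
    rwa [Set.image_univ] at this
  have hx₀ : Set.range (· * p) ∈ 𝒮 := by
    refine ⟨⟨p * p, p, rfl⟩, hclosed_range p, le_refl _, ?_⟩
    rintro r x ⟨s, rfl⟩
    exact ⟨r * s, mul_assoc r s p⟩
  have hchain : ∀ c ⊆ 𝒮, IsChain (· ⊆ ·) c → c.Nonempty →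
      ∃ lb ∈ 𝒮, ∀ s ∈ c, lb ⊆ s := by
    intro c hcS hc hcne
    refine ⟨⋂₀ c, ⟨?_, isClosed_sInter fun t ht => (hcS ht).2.1, ?_, ?_⟩,
      fun s hs => Set.sInter_subset_of_mem hs⟩
    · haveI := hcne.coe_sort
      have := IsCompact.nonempty_iInter_of_directed_nonempty_isCompact_isClosed
        (ι := c) ((↑) : c → Set (Ultrafilter S))
        (DirectedOn.directed_val (IsChain.directedOn hc.symm))
        (fun i => (hcS i.prop).1) (fun i => (hcS i.prop).2.1.isCompact)
        (fun i => (hcS i.prop).2.1)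
      rwa [Set.sInter_eq_iInter]
    · obtain ⟨t, ht⟩ := hcne
      exact (Set.sInter_subset_of_mem ht).trans (hcS ht).2.2.1
    · intro r x hx
      rw [Set.mem_sInter] at hx ⊢
      exact fun t ht => (hcS ht).2.2.2 r x (hx t ht)
  obtain ⟨L, hLsub, hLmin⟩ := zorn_superset_nonempty 𝒮 hchain _ hx₀
  obtain ⟨hLne, hLcl, hLr, hLideal⟩ := hLmin.prop
  -- idempotent f in L
  obtain ⟨f, hfL, hff⟩ := exists_idempotent_in_compact_subsemigroup
    Ultrafilter.continuous_mul_left L hLne hLcl.isCompact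
    (fun x hx y hy => hLideal x y hy)
  have hfp : f * p = f := by
    obtain ⟨s, rfl⟩ := hLr hfL
    rw [mul_assoc, hpp]
  -- e' = p * f is an idempotent below p, hence equals p
  have hep : p * f = p := by
    refine hp.2 (p * f) ?_ ?_ ?_
    · show p * f * (p * f) = p * f
      calc p * f * (p * f) = p * (f * p) * f := by simp [mul_assoc]
        _ = p * f * f := by rw [hfp]
        _ = p * (f * f) := by rw [mul_assoc]
        _ = p * f := by rw [hff]
    · show p * f * p = p * f
      rw [mul_assoc, hfp]
    · show p * (p * f) = p * f
      rw [← mul_assoc, hpp]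
  have hpL : p ∈ L := hep ▸ hLideal p f hfL
  -- βS·(q·p) is a member of 𝒮 contained in L, so equals L by minimality
  have hqpL : q * p ∈ L := hLideal q p hpL
  have hJ : Set.range (· * (q * p)) ∈ 𝒮 := by
    refine ⟨⟨(pure e : Ultrafilter S) * (q * p), pure e, rfl⟩, hclosed_range _, ?_, ?_⟩
    · rintro x ⟨s, rfl⟩
      exact ⟨s * q, mul_assoc s q p⟩
    · rintro r x ⟨s, rfl⟩
      exact ⟨r * s, mul_assoc r s (q * p)⟩
  have hJL : Set.range (· * (q * p)) ⊆ L := by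
    rintro x ⟨s, rfl⟩
    exact hLideal s _ hqpL
  have := hLmin.2 hJ hJL hpL
  exact this

theorem key_add {S : Type*} [AddSemigroup S] (e : S) (he : ∀ x, e + x = x)
    {p : Ultrafilter S} (hp : IsMinimalIdempotentAdd p) (q : Ultrafilter S) :
    ∃ r, uadd r (uadd q p) = p := by
  simp only [uadd_eq'] at *
  have hpp : p + p = p := hp.1
  -- the family of nonempty closed left ideals contained in (βS)·p
  set 𝒮 : Set (Set (Ultrafilter S)) :=
    { L | L.Nonempty ∧ IsClosed L ∧ L ⊆ Set.range (· + p) ∧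
        ∀ (r : Ultrafilter S), ∀ x ∈ L, r + x ∈ L } with h𝒮
  have hclosed_range : ∀ w : Ultrafilter S, IsClosed (Set.range (· + w)) := by
    intro w
    have := (isCompact_univ.image (Ultrafilter.continuous_add_left w)).isClosed
    rwa [Set.image_univ] at this
  have hx₀ : Set.range (· + p) ∈ 𝒮 := by
    refine ⟨⟨p + p, p, rfl⟩, hclosed_range p, le_refl _, ?_⟩
    rintro r x ⟨s, rfl⟩
    exact ⟨r + s, add_assoc r s p⟩
  have hchain : ∀ c ⊆ 𝒮, IsChain (· ⊆ ·) c → c.Nonempty →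
      ∃ lb ∈ 𝒮, ∀ s ∈ c, lb ⊆ s := by
    intro c hcS hc hcne
    refine ⟨⋂₀ c, ⟨?_, isClosed_sInter fun t ht => (hcS ht).2.1, ?_, ?_⟩,
      fun s hs => Set.sInter_subset_of_mem hs⟩
    · haveI := hcne.coe_sort
      have := IsCompact.nonempty_iInter_of_directed_nonempty_isCompact_isClosed
        (ι := c) ((↑) : c → Set (Ultrafilter S))
        (DirectedOn.directed_val (IsChain.directedOn hc.symm))
        (fun i => (hcS i.prop).1) (fun i => (hcS i.prop).2.1.isCompact)
        (fun i => (hcS i.prop).2.1)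
      rwa [Set.sInter_eq_iInter]
    · obtain ⟨t, ht⟩ := hcne
      exact (Set.sInter_subset_of_mem ht).trans (hcS ht).2.2.1
    · intro r x hx
      rw [Set.mem_sInter] at hx ⊢
      exact fun t ht => (hcS ht).2.2.2 r x (hx t ht)
  obtain ⟨L, hLsub, hLmin⟩ := zorn_superset_nonempty 𝒮 hchain _ hx₀
  obtain ⟨hLne, hLcl, hLr, hLideal⟩ := hLmin.prop
  -- idempotent f in L
  obtain ⟨f, hfL, hff⟩ := exists_idempotent_in_compact_add_subsemigroup
    Ultrafilter.continuous_add_left L hLne hLcl.isCompact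
    (fun x hx y hy => hLideal x y hy)
  have hfp : f + p = f := by
    obtain ⟨s, rfl⟩ := hLr hfL
    rw [add_assoc, hpp]
  -- e' = p + f is an idempotent below p, hence equals p
  have hep : p + f = p := by
    refine hp.2 (p + f) ?_ ?_ ?_
    · show p + f + (p + f) = p + f
      calc p + f + (p + f) = p + (f + p) + f := by simp [add_assoc]
        _ = p + f + f := by rw [hfp]
        _ = p + (f + f) := by rw [add_assoc]
        _ = p + f := by rw [hff]
    · show p + f + p = p + f
      rw [add_assoc, hfp]
    · show p + (p + f) = p + f
      rw [← add_assoc, hpp]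
  have hpL : p ∈ L := hep ▸ hLideal p f hfL
  -- βS·(q·p) is a member of 𝒮 contained in L, so equals L by minimality
  have hqpL : q + p ∈ L := hLideal q p hpL
  have hJ : Set.range (· + (q + p)) ∈ 𝒮 := by
    refine ⟨⟨(pure e : Ultrafilter S) + (q + p), pure e, rfl⟩, hclosed_range _, ?_, ?_⟩
    · rintro x ⟨s, rfl⟩
      exact ⟨s + q, add_assoc s q p⟩
    · rintro r x ⟨s, rfl⟩
      exact ⟨r + s, add_assoc r s (q + p)⟩
  have hJL : Set.range (· + (q + p)) ⊆ L := by
    rintro x ⟨s, rfl⟩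
    exact hLideal s _ hqpL
  have := hLmin.2 hJ hJL hpL
  exact this

end Aux

/-- If `R` is an integral domain that is not large, witnessed by a nonzero `α` with
`αR` of infinite additive index, then in the partition `R = αR ∪ (R \ αR)` the cell
`αR` is not additively central and `R \ αR` is not multiplicatively central. -/
theorem stmt_16 {R : Type*} [CommRing R] [IsDomain R] (α : R) (hα : α ≠ 0)
    (hinf : ¬ Finite (R ⧸ Ideal.span ({α} : Set R))) :
    ¬ AddCentral ((Ideal.span ({α} : Set R) : Ideal R) : Set R) ∧
    ¬ MulCentralNZ (((Ideal.span ({α} : Set R) : Ideal R) : Set R)ᶜ) := by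
  constructor
  · rintro ⟨p, hp, hH⟩
    set I := Ideal.span ({α} : Set R) with hI
    haveI : Infinite (R ⧸ I) := not_finite_iff_infinite.mp hinf
    set mk : R → R ⧸ I := fun x => Ideal.Quotient.mk I x with hmk
    have hsurj : Function.Surjective mk := Ideal.Quotient.mk_surjective
    set u : Ultrafilter (R ⧸ I) := Filter.hyperfilter (R ⧸ I) with hu
    haveI hne : (Filter.comap mk ↑u).NeBot := by
      refine Filter.comap_neBot fun t ht => ?_
      obtain ⟨z, hz⟩ := u.nonempty_of_mem ht
      obtain ⟨a, rfl⟩ := hsurj z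
      exact ⟨a, hz⟩
    set q : Ultrafilter R := Ultrafilter.of (Filter.comap mk ↑u) with hq
    have hmapq : q.map mk = u := by
      have h1 : ↑(q.map mk) ≤ (↑u : Filter (R ⧸ I)) := by
        calc (↑(q.map mk) : Filter (R ⧸ I)) = Filter.map mk ↑q := rfl
          _ ≤ Filter.map mk (Filter.comap mk ↑u) := Filter.map_mono (Ultrafilter.of_le _)
          _ = ↑u := Filter.map_comap_of_surjective hsurj _
      exact Ultrafilter.coe_injective (u.unique h1)
    have hcoset : ∀ x : R, {y : R | x + y ∈ (I : Set R)} ∉ q := by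
      intro x hxq
      have h2 : mk ⁻¹' {mk (-x)} ∈ q := by
        refine Filter.mem_of_superset hxq ?_
        intro y hy
        simp only [Set.mem_preimage, Set.mem_singleton_iff]
        refine Ideal.Quotient.eq.mpr ?_
        have : y - -x = x + y := by ring
        rw [this]
        exact hy
      have h3 : {mk (-x)} ∈ q.map mk := Ultrafilter.mem_map.mpr h2
      rw [hmapq] at h3
      exact Filter.notMem_hyperfilter_of_finite (Set.finite_singleton _) h3
    obtain ⟨r, hr⟩ := key_add (0 : R) (fun x => zero_add x) hp q
    have hHp : ((I : Ideal R) : Set R) ∈ p := hH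
    rw [← hr, mem_uadd'] at hH
    obtain ⟨x, hx⟩ := Ultrafilter.nonempty_of_mem hH
    rw [Set.mem_setOf_eq, mem_uadd'] at hx
    refine hcoset x (Filter.mem_of_superset hx ?_)
    intro b hb
    rw [Set.mem_setOf_eq] at hb
    have h4 := Filter.inter_mem hb hHp
    obtain ⟨c, hc1, hc2⟩ := Ultrafilter.nonempty_of_mem h4
    have hc1' : x + (b + c) ∈ I := hc1
    have hc2' : c ∈ I := hc2
    show x + b ∈ I
    have heq : x + b = x + (b + c) - c := by ring
    rw [heq]
    exact I.sub_mem hc1' hc2'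
  · rintro ⟨p, hp, hA⟩
    set I := Ideal.span ({α} : Set R) with hI
    set a : {x : R // x ≠ 0} := ⟨α, hα⟩ with ha
    obtain ⟨r, hr⟩ := key_mul (⟨1, one_ne_zero⟩ : {x : R // x ≠ 0})
      (fun x => Subtype.ext (one_mul x.1)) hp (pure a)
    rw [← hr, mem_umul'] at hA
    obtain ⟨x, hx⟩ := Ultrafilter.nonempty_of_mem hA
    rw [Set.mem_setOf_eq, mem_umul'] at hx
    rw [Ultrafilter.mem_pure] at hx
    obtain ⟨c, hc⟩ := Ultrafilter.nonempty_of_mem hx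
    simp only [Set.mem_setOf_eq] at hc
    refine hc ?_
    show (x * (a * c) : {x : R // x ≠ 0}).1 ∈ (I : Set R)
    show x.1 * (α * c.1) ∈ I
    exact Ideal.mul_mem_left _ _ (Ideal.mul_mem_right _ _ (Ideal.mem_span_singleton_self α))
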